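/- Let h = {h_m}_{m∈ℕ} be a countable collection of locally integrable functions on ℝⁿ, and suppose M_{i,p,s}h(x₀) < ∞ for some point x₀. Then there exists a collection P = {P_m} of polynomials with deg P_m < i such that for every cube Q, the function x ↦ (Σ_m |h_m(x) - P_m(x)|²)^{1/2} belongs to L^p(Q); i.e., h - P ∈ L^p_loc(ℝⁿ, ℓ²). -/

import Mathlib

open MeasureTheory ENNReal

/-- An axis-parallel cube in `ℝⁿ` with lower corner `c` and side length `L`. -/
def cube (n : ℕ) (c : Fin n → ℝ) (L : ℝ) : Set (Fin n → ℝ) :=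
  Set.univ.pi fun d => Set.Icc (c d) (c d + L)

/-- `q` is a polynomial of degree strictly less than `i` (`𝒫₀ = {0}`). -/
def DegLT (n i : ℕ) (q : MvPolynomial (Fin n) ℝ) : Prop :=
  ∀ d ∈ q.support, (d.sum fun _ e => e) < i

/-- The Morrey–Campanato expression for a collection `h` on the cube with corner `c`,
side `L`, relative to a collection `P` of polynomials. -/
noncomputable def campExpr (n : ℕ) (p s : ℝ) (h : ℕ → (Fin n → ℝ) → ℝ)
    (P : ℕ → MvPolynomial (Fin n) ℝ) (c : Fin n → ℝ) (L : ℝ) : ℝ≥0∞ :=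
  (ENNReal.ofReal (L ^ n)) ^ (-(s / (n : ℝ))) *
    ((ENNReal.ofReal (L ^ n))⁻¹ *
      ∫⁻ x in cube n c L,
        (∑' m, ((‖h m x - MvPolynomial.eval x (P m)‖₊ : ℝ≥0∞)) ^ 2) ^ (p / 2)) ^ (1 / p)

/-! ### Auxiliary lemmas -/

lemma mv_vanish_zero : ∀ (n : ℕ) (q : MvPolynomial (Fin n) ℝ) (c : Fin n → ℝ) (L : ℝ), 0 < L →
    (∀ x : Fin n → ℝ, (∀ d, x d ∈ Set.Icc (c d) (c d + L)) → MvPolynomial.eval x q = 0) →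
    q = 0 := by
  intro n
  induction n with
  | zero =>
    intro q c L hL hv
    apply MvPolynomial.funext
    intro x
    rw [map_zero]
    exact hv x (fun d => d.elim0)
  | succ m IH =>
    intro q c L hL hv
    have hcoeff : ∀ k, (MvPolynomial.finSuccEquiv ℝ m q).coeff k = 0 := by
      intro k
      apply IH _ (fun j => c j.succ) L hL
      intro x hx
      have hmap : Polynomial.map (MvPolynomial.eval x) (MvPolynomial.finSuccEquiv ℝ m q) = 0 := by
        apply Polynomial.eq_zero_of_infinite_isRoot
        apply Set.Infinite.mono (s := Set.Icc (c 0) (c 0 + L)) ?_ (Set.Icc_infinite (by linarith))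
        intro t ht
        have := hv (Fin.cons t x) ?_
        · simpa [Polynomial.IsRoot, ← MvPolynomial.eval_eq_eval_mv_eval'] using this
        · intro d
          refine Fin.cases ?_ ?_ d
          · simpa using ht
          · intro j; simpa using hx j
      have hck : (Polynomial.map (MvPolynomial.eval x) (MvPolynomial.finSuccEquiv ℝ m q)).coeff k
          = 0 := by rw [hmap]; simp
      rwa [Polynomial.coeff_map] at hck
    have hF : MvPolynomial.finSuccEquiv ℝ m q = 0 := Polynomial.ext (by simpa using hcoeff)
    have := congrArg (MvPolynomial.finSuccEquiv ℝ m).symm hF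
    simpa using this

lemma mv_vanish_of_null (n : ℕ) (c : Fin n → ℝ) (L : ℝ) (hL : 0 < L) (S : Set (Fin n → ℝ))
    (hnull : volume (cube n c L \ S) = 0)
    (q : MvPolynomial (Fin n) ℝ) (hv : ∀ x ∈ S, MvPolynomial.eval x q = 0) : q = 0 := by
  set O := Set.univ.pi fun d : Fin n => Set.Ioo (c d) (c d + L) with hOdef
  have hOopen : IsOpen O := isOpen_set_pi Set.finite_univ (fun d _ => isOpen_Ioo)
  have hOsub : O ⊆ cube n c L := Set.pi_mono fun d _ => Set.Ioo_subset_Icc_self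
  have hOc : O ⊆ closure S := by
    intro y hy
    rw [mem_closure_iff]
    intro U hU hyU
    by_contra hne
    rw [Set.not_nonempty_iff_eq_empty] at hne
    have hsub : U ∩ O ⊆ cube n c L \ S := by
      intro z hz
      refine ⟨hOsub hz.2, fun hzS => ?_⟩
      have : z ∈ U ∩ S := ⟨hz.1, hzS⟩
      simp [hne] at this
    have hpos : 0 < volume (U ∩ O) := (hU.inter hOopen).measure_pos volume ⟨y, hyU, hy⟩
    exact hpos.ne' (le_antisymm (le_trans (measure_mono hsub) hnull.le) zero_le)
  have hZ : IsClosed {x : Fin n → ℝ | MvPolynomial.eval x q = 0} :=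
    isClosed_eq (MvPolynomial.continuous_eval q) continuous_const
  have hclS : closure S ⊆ {x | MvPolynomial.eval x q = 0} := closure_minimal hv hZ
  have hcO : closure O = cube n c L := by
    rw [hOdef, cube, closure_pi_set]
    exact Set.pi_congr rfl fun d _ => closure_Ioo (by linarith)
  have hQZ : cube n c L ⊆ {x | MvPolynomial.eval x q = 0} := by
    rw [← hcO]
    exact closure_minimal (hOc.trans hclS) hZ
  exact mv_vanish_zero n q c L hL fun x hx => hQZ (fun d _ => hx d)

noncomputable def evalL (n : ℕ) (x : Fin n → ℝ) : MvPolynomial (Fin n) ℝ →ₗ[ℝ] ℝ where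
  toFun q := MvPolynomial.eval x q
  map_add' := by simp
  map_smul' := by simp [MvPolynomial.smul_eval]

noncomputable def coeffL (n : ℕ) (d : Fin n →₀ ℕ) : MvPolynomial (Fin n) ℝ →ₗ[ℝ] ℝ where
  toFun q := MvPolynomial.coeff d q
  map_add' := by simp [MvPolynomial.coeff_add]
  map_smul' := by simp [MvPolynomial.coeff_smul]

lemma exists_eval_finset (n : ℕ) (V : Submodule ℝ (MvPolynomial (Fin n) ℝ))
    [FiniteDimensional ℝ V] (S : Set (Fin n → ℝ))
    (hS : ∀ q ∈ V, (∀ x ∈ S, MvPolynomial.eval x q = 0) → q = 0) :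
    ∃ F : Finset (Fin n → ℝ), ↑F ⊆ S ∧
      ∀ q ∈ V, (∀ x ∈ F, MvPolynomial.eval x q = 0) → q = 0 := by
  classical
  let K : Finset (Fin n → ℝ) → Submodule ℝ V :=
    fun F => ⨅ x ∈ F, LinearMap.ker ((evalL n x).comp V.subtype)
  have hKmem : ∀ (F : Finset (Fin n → ℝ)) (v : V), v ∈ K F ↔
      ∀ x ∈ F, MvPolynomial.eval x (v : MvPolynomial (Fin n) ℝ) = 0 := by
    intro F v
    simp [K, Submodule.mem_iInf, LinearMap.mem_ker, evalL]
  let ranks : Set ℕ := {r | ∃ F : Finset (Fin n → ℝ), ↑F ⊆ S ∧ Module.finrank ℝ (K F) = r}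
  have hne : ranks.Nonempty := ⟨_, ∅, by simp, rfl⟩
  obtain ⟨F₀, hF₀S, hF₀r⟩ := Nat.sInf_mem hne
  refine ⟨F₀, hF₀S, ?_⟩
  have hbot : K F₀ = ⊥ := by
    by_contra hKne
    obtain ⟨v, hvK, hv0⟩ := (Submodule.ne_bot_iff _).1 hKne
    have hvV : (v : MvPolynomial (Fin n) ℝ) ∈ V := v.2
    have hnall : ¬ (∀ x ∈ S, MvPolynomial.eval x (v : MvPolynomial (Fin n) ℝ) = 0) := by
      intro hall
      exact hv0 (Subtype.ext (hS _ hvV hall))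
    push_neg at hnall
    obtain ⟨x, hxS, hxne⟩ := hnall
    have hle : K (insert x F₀) ≤ K F₀ := by
      intro v hv
      exact (hKmem _ v).2 fun y hy => (hKmem _ v).1 hv y (Finset.mem_insert_of_mem hy)
    have hlt : K (insert x F₀) < K F₀ := by
      refine lt_of_le_of_ne hle fun heq => hxne ?_
      rw [← heq] at hvK
      exact (hKmem _ v).1 hvK x (Finset.mem_insert_self _ _)
    have hrk : Module.finrank ℝ (K (insert x F₀)) < sInf ranks :=
      hF₀r ▸ Submodule.finrank_lt_finrank_of_lt hlt
    have hmem : Module.finrank ℝ (K (insert x F₀)) ∈ ranks :=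
      ⟨insert x F₀, by rw [Finset.coe_insert]; exact Set.insert_subset hxS hF₀S, rfl⟩
    exact absurd (Nat.sInf_le hmem) (not_le.2 hrk)
  intro q hq hqv
  have hm : (⟨q, hq⟩ : V) ∈ K F₀ := (hKmem _ _).2 hqv
  rw [hbot, Submodule.mem_bot] at hm
  simpa using congrArg Subtype.val hm

lemma coeff_sq_bound (n : ℕ) (V : Submodule ℝ (MvPolynomial (Fin n) ℝ))
    [FiniteDimensional ℝ V] (S : Set (Fin n → ℝ))
    (hS : ∀ q ∈ V, (∀ x ∈ S, MvPolynomial.eval x q = 0) → q = 0) :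
    ∃ F : Finset (Fin n → ℝ), ↑F ⊆ S ∧ ∀ d : Fin n →₀ ℕ, ∃ C : ℝ, 0 ≤ C ∧
      ∀ q ∈ V, (MvPolynomial.coeff d q)^2 ≤ C * ∑ x ∈ F, (MvPolynomial.eval x q)^2 := by
  classical
  obtain ⟨F, hFS, hFinj⟩ := exists_eval_finset n V S hS
  let E : V →ₗ[ℝ] (F → ℝ) := LinearMap.pi fun x : F => (evalL n x).comp V.subtype
  have hker : LinearMap.ker E = ⊥ := by
    rw [LinearMap.ker_eq_bot']
    intro v hv
    apply Subtype.ext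
    apply hFinj _ v.2
    intro x hx
    have := congrFun hv ⟨x, hx⟩
    simpa [E, evalL] using this
  obtain ⟨G, hG⟩ := E.exists_leftInverse_of_injective hker
  refine ⟨F, hFS, fun d => ?_⟩
  set φ : (F → ℝ) →ₗ[ℝ] ℝ := (coeffL n d).comp (V.subtype.comp G) with hφ
  set w : F → ℝ := fun x => φ (fun j => if x = j then 1 else 0) with hw
  refine ⟨∑ x : F, (w x)^2, Finset.sum_nonneg (fun _ _ => sq_nonneg _), ?_⟩
  intro q hq
  have hGE : G (E ⟨q, hq⟩) = ⟨q, hq⟩ := by rw [← LinearMap.comp_apply, hG]; rfl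
  have h1 : φ (E ⟨q, hq⟩) = MvPolynomial.coeff d q := by
    simp [hφ, hGE, coeffL]
  have hrec : MvPolynomial.coeff d q = ∑ x : F, MvPolynomial.eval (x : Fin n → ℝ) q * w x := by
    rw [← h1, LinearMap.pi_apply_eq_sum_univ φ (E ⟨q, hq⟩)]
    refine Finset.sum_congr rfl fun x _ => ?_
    simp [E, evalL, smul_eq_mul, hw]
  calc (MvPolynomial.coeff d q)^2
      = (∑ x : F, MvPolynomial.eval (x : Fin n → ℝ) q * w x)^2 := by rw [hrec]
    _ ≤ (∑ x : F, (MvPolynomial.eval (x : Fin n → ℝ) q)^2) * ∑ x : F, (w x)^2 :=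
        Finset.sum_mul_sq_le_sq_mul_sq _ _ _
    _ = (∑ x : F, (w x)^2) * ∑ x ∈ F, (MvPolynomial.eval x q)^2 := by
        rw [mul_comm]
        congr 1
        exact Finset.sum_coe_sort F (fun x => (MvPolynomial.eval x q)^2)

lemma camp_unpack {n : ℕ} {p s : ℝ} {h : ℕ → (Fin n → ℝ) → ℝ}
    {P : ℕ → MvPolynomial (Fin n) ℝ} {c : Fin n → ℝ} {L : ℝ} {M : ℝ≥0∞}
    (hp : 1 ≤ p) (hL : 0 < L) (hM : M ≠ ⊤) (hle : campExpr n p s h P c L ≤ M) :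
    (∫⁻ x in cube n c L,
      (∑' m, ((‖h m x - MvPolynomial.eval x (P m)‖₊ : ℝ≥0∞)) ^ 2) ^ (p / 2)) < ⊤ := by
  rw [lt_top_iff_ne_top]
  intro hI
  rw [campExpr, hI] at hle
  have htpos : (0:ℝ) < L ^ n := pow_pos hL n
  have ha : (ENNReal.ofReal (L ^ n)) ^ (-(s / (n : ℝ))) ≠ 0 := by
    rw [ENNReal.ofReal_rpow_of_pos htpos]
    exact (ENNReal.ofReal_pos.2 (Real.rpow_pos_of_pos htpos _)).ne'
  have hb : (ENNReal.ofReal (L ^ n))⁻¹ ≠ 0 := ENNReal.inv_ne_zero.2 ENNReal.ofReal_ne_top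
  rw [ENNReal.mul_top hb, ENNReal.top_rpow_of_pos (by positivity), ENNReal.mul_top ha,
    top_le_iff] at hle
  exact hM hle

lemma enn_sq (r : ℝ) : ((‖r‖₊ : ℝ≥0∞)) ^ 2 = ENNReal.ofReal (r ^ 2) := by
  rw [← sq_abs, ENNReal.ofReal_pow (abs_nonneg r), ← Real.enorm_eq_ofReal_abs]; rfl

lemma ofReal_sq_sub_le (u v : ℝ) : ENNReal.ofReal ((u - v)^2) ≤
    2 * ENNReal.ofReal (u^2) + 2 * ENNReal.ofReal (v^2) := by
  calc ENNReal.ofReal ((u - v)^2) ≤ ENNReal.ofReal (2*u^2 + 2*v^2) :=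
        ENNReal.ofReal_le_ofReal (by nlinarith [sq_nonneg (u + v)])
    _ = 2 * ENNReal.ofReal (u^2) + 2 * ENNReal.ofReal (v^2) := by
        rw [ENNReal.ofReal_add (by positivity) (by positivity),
          ENNReal.ofReal_mul (by norm_num), ENNReal.ofReal_mul (by norm_num),
          ENNReal.ofReal_ofNat]

lemma rpow_add_le (x y : ℝ≥0∞) (r : ℝ) (hr : 0 ≤ r) :
    (x + y) ^ r ≤ 2 ^ r * x ^ r + 2 ^ r * y ^ r := by
  rcases le_total x y with hxy | hxy
  · calc (x + y) ^ r ≤ (2 * y) ^ r := by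
          apply ENNReal.rpow_le_rpow _ hr
          rw [two_mul]; exact add_le_add_left hxy _
      _ = 2 ^ r * y ^ r := ENNReal.mul_rpow_of_nonneg _ _ hr
      _ ≤ _ := le_add_self
  · calc (x + y) ^ r ≤ (2 * x) ^ r := by
          apply ENNReal.rpow_le_rpow _ hr
          rw [two_mul]; exact add_le_add_right hxy _
      _ = 2 ^ r * x ^ r := ENNReal.mul_rpow_of_nonneg _ _ hr
      _ ≤ _ := le_add_right (le_refl _)

lemma cube_sub (n : ℕ) (c x₀ : Fin n → ℝ) (L : ℝ) (hL : 0 < L) :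
    cube n c L ⊆ cube n (fun d => min (c d) (x₀ d)) (L + 1 + ∑ d, |c d - x₀ d|) ∧
    cube n x₀ 1 ⊆ cube n (fun d => min (c d) (x₀ d)) (L + 1 + ∑ d, |c d - x₀ d|) := by
  have hT0 : (0:ℝ) ≤ ∑ d, |c d - x₀ d| := Finset.sum_nonneg fun _ _ => abs_nonneg _
  have habs : ∀ d : Fin n, |c d - x₀ d| ≤ ∑ d, |c d - x₀ d| := fun d =>
    Finset.single_le_sum (f := fun d => |c d - x₀ d|) (fun _ _ => abs_nonneg _)
      (Finset.mem_univ d)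
  constructor
  · intro x hx d _
    have h1 := hx d (Set.mem_univ d)
    simp only [Set.mem_Icc] at h1
    have h2 := habs d
    have h3 := abs_sub_abs_le_abs_sub (c d) (x₀ d)
    have h4 := le_abs_self (c d - x₀ d)
    have h5 := neg_abs_le (c d - x₀ d)
    dsimp only
    simp only [Set.mem_Icc]
    rcases le_total (c d) (x₀ d) with hcx | hcx
    · rw [min_eq_left hcx]; constructor <;> linarith
    · rw [min_eq_right hcx]; constructor <;> linarith
  · intro x hx d _
    have h1 := hx d (Set.mem_univ d)
    simp only [Set.mem_Icc] at h1
    have h2 := habs d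
    have h4 := le_abs_self (c d - x₀ d)
    have h5 := neg_abs_le (c d - x₀ d)
    dsimp only
    simp only [Set.mem_Icc]
    rcases le_total (c d) (x₀ d) with hcx | hcx
    · rw [min_eq_left hcx]; constructor <;> linarith
    · rw [min_eq_right hcx]; constructor <;> linarith

theorem stmt6 (n i : ℕ) (hn : 0 < n) (p s : ℝ) (hp : 1 ≤ p)
    (h : ℕ → (Fin n → ℝ) → ℝ) (hloc : ∀ m, LocallyIntegrable (h m) volume)
    (x₀ : Fin n → ℝ)
    (hfin : ∃ M : ℝ≥0∞, M ≠ ⊤ ∧ ∀ (c : Fin n → ℝ) (L : ℝ), 0 < L → x₀ ∈ cube n c L →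
      ∃ P : ℕ → MvPolynomial (Fin n) ℝ, (∀ m, DegLT n i (P m)) ∧
        campExpr n p s h P c L ≤ M) :
    ∃ P : ℕ → MvPolynomial (Fin n) ℝ, (∀ m, DegLT n i (P m)) ∧
      ∀ (c : Fin n → ℝ) (L : ℝ), 0 < L →
        (∫⁻ x in cube n c L,
          (∑' m, ((‖h m x - MvPolynomial.eval x (P m)‖₊ : ℝ≥0∞)) ^ 2) ^ (p / 2)) < ⊤ := by
  classical
  obtain ⟨M, hM, hMall⟩ := hfin
  have hr2 : (0:ℝ) ≤ p / 2 := by linarith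
  have hrpos : (0:ℝ) < p / 2 := by linarith
  have hQ₀meas : MeasurableSet (cube n x₀ 1) :=
    MeasurableSet.univ_pi fun d => measurableSet_Icc
  have hQ₀mem : x₀ ∈ cube n x₀ 1 := fun d _ => ⟨le_refl _, by linarith⟩
  obtain ⟨P, hPdeg, hPcamp⟩ := hMall x₀ 1 one_pos hQ₀mem
  refine ⟨P, hPdeg, ?_⟩
  intro c L hL
  obtain ⟨hsub1, hsub0⟩ := cube_sub n c x₀ L hL
  set L' : ℝ := L + 1 + ∑ d, |c d - x₀ d| with hL'def
  set c' : Fin n → ℝ := fun d => min (c d) (x₀ d) with hc'def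
  have hT0 : (0:ℝ) ≤ ∑ d, |c d - x₀ d| := Finset.sum_nonneg fun _ _ => abs_nonneg _
  have hL' : 0 < L' := by rw [hL'def]; linarith
  have hx₀' : x₀ ∈ cube n c' L' := hsub0 hQ₀mem
  obtain ⟨P', hP'deg, hP'camp⟩ := hMall c' L' hL' hx₀'
  -- the ℓ²-sums, in ofReal form
  set gP : (Fin n → ℝ) → ℝ≥0∞ :=
    fun x => ∑' m, ENNReal.ofReal ((h m x - MvPolynomial.eval x (P m))^2) with hgPdef
  set gP' : (Fin n → ℝ) → ℝ≥0∞ :=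
    fun x => ∑' m, ENNReal.ofReal ((h m x - MvPolynomial.eval x (P' m))^2) with hgP'def
  have hIP : (∫⁻ x in cube n x₀ 1, (gP x) ^ (p/2)) < ⊤ := by
    have := camp_unpack hp one_pos hM hPcamp
    simpa only [enn_sq] using this
  have hIP' : (∫⁻ x in cube n c' L', (gP' x) ^ (p/2)) < ⊤ := by
    have := camp_unpack hp hL' hM hP'camp
    simpa only [enn_sq] using this
  have hIP'0 : (∫⁻ x in cube n x₀ 1, (gP' x) ^ (p/2)) < ⊤ :=
    lt_of_le_of_lt (lintegral_mono_set hsub0) hIP'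
  -- measurability
  have hmeasg : ∀ (Pc : ℕ → MvPolynomial (Fin n) ℝ) (t : Set (Fin n → ℝ)),
      AEMeasurable (fun x => ∑' m, ENNReal.ofReal ((h m x - MvPolynomial.eval x (Pc m))^2))
        (volume.restrict t) := by
    intro Pc t
    apply AEMeasurable.mono_measure _ Measure.restrict_le_self
    apply AEMeasurable.ennreal_tsum
    intro m
    apply ENNReal.measurable_ofReal.comp_aemeasurable
    have hsub : AEMeasurable (fun x => h m x - MvPolynomial.eval x (Pc m)) volume :=
      ((hloc m).aestronglyMeasurable.aemeasurable).sub
        ((MvPolynomial.continuous_eval (Pc m)).measurable.aemeasurable)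
    exact hsub.pow_const 2
  -- a.e. finiteness on the unit cube
  have haefin : ∀ᵐ x ∂(volume.restrict (cube n x₀ 1)), gP x ≠ ⊤ ∧ gP' x ≠ ⊤ := by
    have h1 : ∀ᵐ x ∂(volume.restrict (cube n x₀ 1)), gP x ^ (p/2) < ⊤ :=
      ae_lt_top' ((hmeasg P _).pow_const (p/2)) hIP.ne
    have h2 : ∀ᵐ x ∂(volume.restrict (cube n x₀ 1)), gP' x ^ (p/2) < ⊤ :=
      ae_lt_top' ((hmeasg P' _).pow_const (p/2)) hIP'0.ne
    filter_upwards [h1, h2] with x hx1 hx2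
    constructor
    · intro htop; rw [htop, ENNReal.top_rpow_of_pos hrpos] at hx1; exact absurd hx1 (lt_irrefl _)
    · intro htop; rw [htop, ENNReal.top_rpow_of_pos hrpos] at hx2; exact absurd hx2 (lt_irrefl _)
  set S : Set (Fin n → ℝ) := cube n x₀ 1 ∩ {x | gP x ≠ ⊤ ∧ gP' x ≠ ⊤} with hSdef
  have hnull : volume (cube n x₀ 1 \ S) = 0 := by
    have h1 : (volume.restrict (cube n x₀ 1)) {x | ¬ (gP x ≠ ⊤ ∧ gP' x ≠ ⊤)} = 0 :=
      ae_iff.1 haefin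
    rw [Measure.restrict_apply' hQ₀meas] at h1
    have heq : cube n x₀ 1 \ S = {x | ¬ (gP x ≠ ⊤ ∧ gP' x ≠ ⊤)} ∩ cube n x₀ 1 := by
      ext z
      simp only [hSdef, Set.mem_diff, Set.mem_inter_iff, Set.mem_setOf_eq]
      tauto
    rw [heq]
    exact h1
  set V := MvPolynomial.restrictTotalDegree (Fin n) ℝ i with hVdef
  have hvanish : ∀ q ∈ V, (∀ x ∈ S, MvPolynomial.eval x q = 0) → q = 0 :=
    fun q _ hq => mv_vanish_of_null n x₀ 1 one_pos S hnull q hq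
  obtain ⟨F, hFS, hFC⟩ := coeff_sq_bound n V S hvanish
  set Q : ℕ → MvPolynomial (Fin n) ℝ := fun m => P m - P' m with hQdef
  have hdegV : ∀ (r : MvPolynomial (Fin n) ℝ), DegLT n i r → r ∈ V := by
    intro r hr
    rw [hVdef, MvPolynomial.mem_restrictTotalDegree]
    exact Finset.sup_le fun d hd => (hr d hd).le
  have hQV : ∀ m, Q m ∈ V :=
    fun m => Submodule.sub_mem V (hdegV _ (hPdeg m)) (hdegV _ (hP'deg m))
  have hQeval : ∀ m x, MvPolynomial.eval x (Q m) =
      (h m x - MvPolynomial.eval x (P' m)) - (h m x - MvPolynomial.eval x (P m)) := by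
    intro m x; simp only [hQdef, map_sub]; ring
  have hSx : ∀ x ∈ S, (∑' m, ENNReal.ofReal ((MvPolynomial.eval x (Q m))^2)) < ⊤ := by
    rintro x ⟨hx1, hxP, hxP'⟩
    calc (∑' m, ENNReal.ofReal ((MvPolynomial.eval x (Q m))^2))
        ≤ ∑' m, (2 * ENNReal.ofReal ((h m x - MvPolynomial.eval x (P' m))^2) +
            2 * ENNReal.ofReal ((h m x - MvPolynomial.eval x (P m))^2)) := by
          apply ENNReal.tsum_le_tsum
          intro m
          rw [hQeval m x]
          exact ofReal_sq_sub_le _ _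
      _ = 2 * gP' x + 2 * gP x := by
          rw [ENNReal.tsum_add, ENNReal.tsum_mul_left, ENNReal.tsum_mul_left]
      _ < ⊤ := by
          apply ENNReal.add_lt_top.2
          exact ⟨ENNReal.mul_lt_top (by norm_num) (lt_top_iff_ne_top.2 hxP'),
            ENNReal.mul_lt_top (by norm_num) (lt_top_iff_ne_top.2 hxP)⟩
  have hA : ∀ d : Fin n →₀ ℕ, (∑' m, ENNReal.ofReal ((MvPolynomial.coeff d (Q m))^2)) < ⊤ := by
    intro d
    obtain ⟨C, hC0, hCb⟩ := hFC d
    calc (∑' m, ENNReal.ofReal ((MvPolynomial.coeff d (Q m))^2))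
        ≤ ∑' m, ENNReal.ofReal (C * ∑ x ∈ F, (MvPolynomial.eval x (Q m))^2) :=
          ENNReal.tsum_le_tsum fun m => ENNReal.ofReal_le_ofReal (hCb (Q m) (hQV m))
      _ = ∑' m, (ENNReal.ofReal C * ∑ x ∈ F, ENNReal.ofReal ((MvPolynomial.eval x (Q m))^2)) := by
          apply tsum_congr; intro m
          rw [ENNReal.ofReal_mul hC0, ENNReal.ofReal_sum_of_nonneg (fun _ _ => sq_nonneg _)]
      _ = ENNReal.ofReal C * ∑ x ∈ F, ∑' m, ENNReal.ofReal ((MvPolynomial.eval x (Q m))^2) := by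
          rw [ENNReal.tsum_mul_left]
          congr 1
          exact Summable.tsum_finsetSum fun x _ => ENNReal.summable
      _ < ⊤ := ENNReal.mul_lt_top ENNReal.ofReal_lt_top
          (ENNReal.sum_lt_top.2 fun x hx => hSx x (hFS hx))
  set D : Finset (Fin n →₀ ℕ) := Finset.Iic (Finsupp.equivFunOnFinite.symm fun _ : Fin n => i)
    with hDdef
  have hsupp : ∀ m, (Q m).support ⊆ D := by
    intro m d hd
    simp only [hQdef] at hd
    have hdi : (d.sum fun _ e => e) < i := by
      have hmem := MvPolynomial.support_sub _ (P m) (P' m) hd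
      rcases Finset.mem_union.1 hmem with h' | h'
      exacts [hPdeg m d h', hP'deg m d h']
    have hcomp : ∀ j, d j ≤ i := by
      intro j
      rcases eq_or_ne (d j) 0 with h0 | h0
      · simp [h0]
      · calc d j ≤ d.sum fun _ e => e :=
              Finset.single_le_sum (f := fun k => d k) (fun _ _ => Nat.zero_le _)
                (Finsupp.mem_support_iff.2 h0)
          _ ≤ i := hdi.le
    rw [hDdef, Finset.mem_Iic, Finsupp.le_def]
    intro j
    simpa using hcomp j
  have heval : ∀ m (x : Fin n → ℝ), MvPolynomial.eval x (Q m) =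
      ∑ d ∈ D, MvPolynomial.coeff d (Q m) * ∏ j, x j ^ d j := by
    intro m x
    rw [MvPolynomial.eval_eq']
    exact Finset.sum_subset (hsupp m) (fun d _ hd => by
      rw [MvPolynomial.notMem_support_iff.1 hd, zero_mul])
  set U : (Fin n → ℝ) → ℝ := fun x => ∑ d ∈ D, (∏ j, x j ^ d j)^2 with hUdef
  have hUcont : Continuous U := by
    apply continuous_finset_sum
    intro d _
    exact (continuous_finset_prod _ fun j _ => (continuous_apply j).pow _).pow _
  have hcompact : IsCompact (cube n c L) := isCompact_univ_pi fun d => isCompact_Icc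
  have hcne : (cube n c L).Nonempty := ⟨c, fun d _ => ⟨le_refl _, by linarith⟩⟩
  obtain ⟨y₀, hy₀mem, hy₀max⟩ := hcompact.exists_isMaxOn hcne hUcont.continuousOn
  set A : (Fin n →₀ ℕ) → ℝ≥0∞ := fun d => ∑' m, ENNReal.ofReal ((MvPolynomial.coeff d (Q m))^2)
    with hAdef
  set Eb : ℝ≥0∞ := (∑ d ∈ D, A d) * ENNReal.ofReal (U y₀) with hEbdef
  have hEbtop : Eb ≠ ⊤ :=
    ENNReal.mul_ne_top (ENNReal.sum_lt_top.2 fun d _ => hA d).ne ENNReal.ofReal_ne_top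
  have hgq : ∀ x ∈ cube n c L,
      (∑' m, ENNReal.ofReal ((MvPolynomial.eval x (Q m))^2)) ≤ Eb := by
    intro x hx
    calc (∑' m, ENNReal.ofReal ((MvPolynomial.eval x (Q m))^2))
        ≤ ∑' m, ENNReal.ofReal ((∑ d ∈ D, (MvPolynomial.coeff d (Q m))^2) * U x) := by
          apply ENNReal.tsum_le_tsum
          intro m
          apply ENNReal.ofReal_le_ofReal
          rw [heval m x, hUdef]
          exact Finset.sum_mul_sq_le_sq_mul_sq D _ _
      _ = ∑' m, ((∑ d ∈ D, ENNReal.ofReal ((MvPolynomial.coeff d (Q m))^2)) *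
            ENNReal.ofReal (U x)) := by
          apply tsum_congr; intro m
          rw [ENNReal.ofReal_mul (Finset.sum_nonneg fun _ _ => sq_nonneg _),
            ENNReal.ofReal_sum_of_nonneg (fun _ _ => sq_nonneg _)]
      _ = (∑ d ∈ D, A d) * ENNReal.ofReal (U x) := by
          rw [ENNReal.tsum_mul_right]
          congr 1
          exact Summable.tsum_finsetSum fun d _ => ENNReal.summable
      _ ≤ Eb := mul_le_mul_right (ENNReal.ofReal_le_ofReal ((isMaxOn_iff.1 hy₀max) x hx)) _
  set κ : ℝ≥0∞ := 2 ^ (p/2) * 2 ^ (p/2) with hκdef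
  have hκtop : κ ≠ ⊤ := ENNReal.mul_ne_top
    (ENNReal.rpow_ne_top_of_nonneg hr2 (by norm_num))
    (ENNReal.rpow_ne_top_of_nonneg hr2 (by norm_num))
  have hpt : ∀ x ∈ cube n c L, gP x ^ (p/2) ≤ κ * gP' x ^ (p/2) + κ * Eb ^ (p/2) := by
    intro x hx
    have hb1 : gP x ≤ 2 * gP' x + 2 * Eb := by
      calc gP x ≤ ∑' m, (2 * ENNReal.ofReal ((h m x - MvPolynomial.eval x (P' m))^2) +
            2 * ENNReal.ofReal ((MvPolynomial.eval x (Q m))^2)) := by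
            rw [hgPdef]
            apply ENNReal.tsum_le_tsum
            intro m
            have hrw : h m x - MvPolynomial.eval x (P m) =
                (h m x - MvPolynomial.eval x (P' m)) - MvPolynomial.eval x (Q m) := by
              simp only [hQdef, map_sub]; ring
            rw [hrw]
            exact ofReal_sq_sub_le _ _
        _ = 2 * gP' x + 2 * (∑' m, ENNReal.ofReal ((MvPolynomial.eval x (Q m))^2)) := by
            rw [ENNReal.tsum_add, ENNReal.tsum_mul_left, ENNReal.tsum_mul_left]
        _ ≤ 2 * gP' x + 2 * Eb := add_le_add_right (mul_le_mul_right (hgq x hx) _) _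
    calc gP x ^ (p/2) ≤ (2 * gP' x + 2 * Eb) ^ (p/2) := ENNReal.rpow_le_rpow hb1 hr2
      _ ≤ 2 ^ (p/2) * (2 * gP' x) ^ (p/2) + 2 ^ (p/2) * (2 * Eb) ^ (p/2) :=
          rpow_add_le _ _ _ hr2
      _ = κ * gP' x ^ (p/2) + κ * Eb ^ (p/2) := by
          rw [ENNReal.mul_rpow_of_nonneg _ _ hr2, ENNReal.mul_rpow_of_nonneg _ _ hr2, hκdef]
          ring
  have hcubemeas : MeasurableSet (cube n c L) :=
    MeasurableSet.univ_pi fun d => measurableSet_Icc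
  calc (∫⁻ x in cube n c L,
        (∑' m, ((‖h m x - MvPolynomial.eval x (P m)‖₊ : ℝ≥0∞)) ^ 2) ^ (p/2))
      = ∫⁻ x in cube n c L, gP x ^ (p/2) := by
        simp only [enn_sq, hgPdef]
    _ ≤ ∫⁻ x in cube n c L, (κ * gP' x ^ (p/2) + κ * Eb ^ (p/2)) := by
        apply lintegral_mono_ae
        filter_upwards [ae_restrict_mem hcubemeas] with x hx
        exact hpt x hx
    _ = (∫⁻ x in cube n c L, κ * gP' x ^ (p/2)) + κ * Eb ^ (p/2) * volume (cube n c L) := by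
        rw [lintegral_add_right _ measurable_const, setLIntegral_const]
    _ = κ * (∫⁻ x in cube n c L, gP' x ^ (p/2)) + κ * Eb ^ (p/2) * volume (cube n c L) := by
        rw [lintegral_const_mul' κ _ hκtop]
    _ < ⊤ := by
        apply ENNReal.add_lt_top.2
        constructor
        · exact ENNReal.mul_lt_top (lt_top_iff_ne_top.2 hκtop)
            (lt_of_le_of_lt (lintegral_mono_set hsub1) hIP')
        · exact ENNReal.mul_lt_top
            (ENNReal.mul_lt_top (lt_top_iff_ne_top.2 hκtop)
              (ENNReal.rpow_lt_top_of_nonneg hr2 hEbtop))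
            hcompact.measure_lt_top
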